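/- arXiv:2501.15301 — 2 statements merged into one kernel-verified Lean document; each statement's English description precedes it below -/
import Mathlib

section
/- Suppose s : 𝒳 → 𝒮 is sufficient (X−S−Y). Then for every β > 0, L*(p;β) = L*(pSY;β), where pSY is the joint pmf on 𝒮 × 𝒴 given by pSY(s0,y) = ∑_{x : s(x)=s0} p(x,y). -/
open Finset

noncomputable section
open scoped Classical

variable {𝒳 𝒴 𝒮 𝒯 : Type*}

/-- Marginal of a joint pmf on the first coordinate. -/
def margX [Fintype 𝒴] (p : 𝒳 × 𝒴 → ℝ) (x : 𝒳) : ℝ := ∑ y, p (x, y)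

/-- Marginal of a joint pmf on the second coordinate. -/
def margY [Fintype 𝒳] (p : 𝒳 × 𝒴 → ℝ) (y : 𝒴) : ℝ := ∑ x, p (x, y)

/-- Distribution of `S = s(X)`. -/
def margS [Fintype 𝒳] [Fintype 𝒴] (p : 𝒳 × 𝒴 → ℝ) (s : 𝒳 → 𝒮) (s0 : 𝒮) : ℝ :=
  ∑ x ∈ Finset.univ.filter (fun x => s x = s0), margX p x

/-- Distribution of `T = t(Y)`. -/
def margT [Fintype 𝒳] [Fintype 𝒴] (p : 𝒳 × 𝒴 → ℝ) (t : 𝒴 → 𝒯) (t0 : 𝒯) : ℝ :=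
  ∑ y ∈ Finset.univ.filter (fun y => t y = t0), margY p y

/-- Joint distribution of `(S, T) = (s(X), t(Y))`. -/
def margST [Fintype 𝒳] [Fintype 𝒴] (p : 𝒳 × 𝒴 → ℝ) (s : 𝒳 → 𝒮) (t : 𝒴 → 𝒯)
    (w : 𝒮 × 𝒯) : ℝ :=
  ∑ x ∈ Finset.univ.filter (fun x => s x = w.1),
    ∑ y ∈ Finset.univ.filter (fun y => t y = w.2), p (x, y)

/-- `q` is a probability mass function. -/
def IsPMF {Z : Type*} [Fintype Z] (q : Z → ℝ) : Prop := (∀ z, 0 ≤ q z) ∧ ∑ z, q z = 1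

/-- `s` is a sufficient statistic of `X` for `Y` (Markov chain `X - S - Y`). -/
def SuffS [Fintype 𝒴] (p : 𝒳 × 𝒴 → ℝ) (s : 𝒳 → 𝒮) : Prop :=
  ∀ x x' y, s x = s x' → p (x, y) * margX p x' = p (x', y) * margX p x

/-- `t` is a sufficient statistic of `Y` for `X` (Markov chain `X - T - Y`). -/
def SuffT [Fintype 𝒳] (p : 𝒳 × 𝒴 → ℝ) (t : 𝒴 → 𝒯) : Prop :=
  ∀ x y y', t y = t y' → p (x, y) * margY p y' = p (x, y') * margY p y

/-- Mutual information of a joint pmf on `A × B`. -/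
def mutInfo {A B : Type*} [Fintype A] [Fintype B] (q : A × B → ℝ) : ℝ :=
  ∑ z : A × B, if 0 < q z then
    q z * Real.log (q z / ((∑ b, q (z.1, b)) * (∑ a, q (a, z.2)))) else 0

/-- Shannon entropy of a pmf on a finite type. -/
def entropy {W : Type*} [Fintype W] (r : W → ℝ) : ℝ :=
  -∑ w, if 0 < r w then r w * Real.log (r w) else 0

/-- Wyner's common information of a joint pmf `m` on `A × B`. -/
def wynerCI {A B : Type*} [Fintype A] [Fintype B] (m : A × B → ℝ) : ℝ :=
  sInf { c | ∃ (n : ℕ) (q : A × B × Fin n → ℝ),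
    IsPMF q ∧
    (∀ a b, ∑ w, q (a, b, w) = m (a, b)) ∧
    (∀ a b w, q (a, b, w) * (∑ a', ∑ b', q (a', b', w)) =
      (∑ b', q (a, b', w)) * (∑ a', q (a', b, w))) ∧
    c = mutInfo (fun z : Fin n × (A × B) => q (z.2.1, z.2.2, z.1)) }

/-- Gács–Körner common information of a joint pmf `m` on `A × B`. -/
def gkCI {A B : Type*} [Fintype A] [Fintype B] (m : A × B → ℝ) : ℝ :=
  sSup { c | ∃ (n : ℕ) (f : A → Fin n) (g : B → Fin n),
    (∑ z : A × B, if f z.1 ≠ g z.2 then m z else 0) = 0 ∧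
    c = entropy (fun w : Fin n =>
      ∑ a ∈ Finset.univ.filter (fun a => f a = w), ∑ b, m (a, b)) }

/-- Information-bottleneck Lagrangian value. -/
def ibL {A B : Type*} [Fintype A] [Fintype B] (m : A × B → ℝ) (β : ℝ) : ℝ :=
  sInf { c | ∃ (n : ℕ) (r : A → Fin n → ℝ),
    (∀ a u, 0 ≤ r a u) ∧ (∀ a, ∑ u, r a u = 1) ∧
    c = mutInfo (fun z : Fin n × A => r z.2 z.1 * ∑ b, m (z.2, b))
        - β * mutInfo (fun z : Fin n × B => ∑ a, r a z.1 * m (a, z.2)) }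

/-- Information-bottleneck curve. -/
def ibCurve {A B : Type*} [Fintype A] [Fintype B] (m : A × B → ℝ) (R : ℝ) : ℝ :=
  sSup { c | ∃ (n : ℕ) (r : A → Fin n → ℝ),
    (∀ a u, 0 ≤ r a u) ∧ (∀ a, ∑ u, r a u = 1) ∧
    mutInfo (fun z : Fin n × A => r z.2 z.1 * ∑ b, m (z.2, b)) ≤ R ∧
    c = mutInfo (fun z : Fin n × B => ∑ a, r a z.1 * m (a, z.2)) }


section AuxIB

private lemma fiber_sum' {A S : Type*} [Fintype A] [Fintype S] (s : A → S) (g : A → ℝ) :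
    ∑ s0, ∑ a ∈ Finset.univ.filter (fun a => s a = s0), g a = ∑ a, g a :=
  Finset.sum_fiberwise_of_maps_to (fun a _ => Finset.mem_univ (s a)) g

private lemma log_sum_ineq {ι : Type*} (F : Finset ι) (a b : ι → ℝ)
    (ha : ∀ i ∈ F, 0 ≤ a i) (hb : ∀ i ∈ F, 0 ≤ b i)
    (hab : ∀ i ∈ F, 0 < a i → 0 < b i) :
    (if 0 < ∑ i ∈ F, a i then
        (∑ i ∈ F, a i) * Real.log ((∑ i ∈ F, a i) / (∑ i ∈ F, b i)) else 0)
      ≤ ∑ i ∈ F, (if 0 < a i then a i * Real.log (a i / b i) else 0) := by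
  by_cases hSa : 0 < ∑ i ∈ F, a i
  · rw [if_pos hSa]
    have hrhs : ∑ i ∈ F, (if 0 < a i then a i * Real.log (a i / b i) else 0)
        = ∑ i ∈ F.filter (fun i => 0 < a i), a i * Real.log (a i / b i) :=
      (Finset.sum_filter _ _).symm
    have haF : ∑ i ∈ F.filter (fun i => 0 < a i), a i = ∑ i ∈ F, a i :=
      Finset.sum_filter_of_ne (fun i hi h => lt_of_le_of_ne (ha i hi) (Ne.symm h))
    set F' := F.filter (fun i => 0 < a i) with hF'
    have hbpos : ∀ i ∈ F', 0 < b i := by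
      intro i hi
      rw [hF', Finset.mem_filter] at hi
      exact hab i hi.1 hi.2
    have hapos : ∀ i ∈ F', 0 < a i := by
      intro i hi; rw [hF', Finset.mem_filter] at hi; exact hi.2
    have hF'ne : F'.Nonempty := by
      by_contra h
      rw [Finset.not_nonempty_iff_eq_empty] at h
      rw [← haF, h, Finset.sum_empty] at hSa
      exact lt_irrefl 0 hSa
    have hSb' : 0 < ∑ i ∈ F', b i := Finset.sum_pos hbpos hF'ne
    have hble : ∑ i ∈ F', b i ≤ ∑ i ∈ F, b i :=
      Finset.sum_le_sum_of_subset_of_nonneg (Finset.filter_subset _ _)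
        (fun i hi _ => hb i hi)
    rw [hrhs]
    have step1 : (∑ i ∈ F, a i) * Real.log ((∑ i ∈ F, a i) / (∑ i ∈ F, b i))
        ≤ (∑ i ∈ F, a i) * Real.log ((∑ i ∈ F, a i) / (∑ i ∈ F', b i)) := by
      apply mul_le_mul_of_nonneg_left _ hSa.le
      exact Real.log_le_log (div_pos hSa (lt_of_lt_of_le hSb' hble))
        (div_le_div_of_nonneg_left hSa.le hSb' hble)
    refine step1.trans ?_
    -- Jensen's inequality with f x = x * log x
    have key := Real.convexOn_mul_log.map_centerMass_le (t := F')
        (w := b) (p := fun i => a i / b i)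
        (fun i hi => (hbpos i hi).le) hSb'
        (fun i hi => Set.mem_Ici.mpr (div_nonneg (hapos i hi).le (hbpos i hi).le))
    rw [Finset.centerMass, Finset.centerMass] at key
    have hc1 : ∑ i ∈ F', b i • (a i / b i) = ∑ i ∈ F', a i :=
      Finset.sum_congr rfl (fun i hi => by
        rw [smul_eq_mul, mul_comm, div_mul_cancel₀ _ (hbpos i hi).ne'])
    have hc2 : ∑ i ∈ F', b i • ((fun x => x * Real.log x) ∘ (fun i => a i / b i)) i
        = ∑ i ∈ F', a i * Real.log (a i / b i) :=
      Finset.sum_congr rfl (fun i hi => by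
        simp only [Function.comp, smul_eq_mul]
        rw [← mul_assoc, mul_comm (b i), div_mul_cancel₀ _ (hbpos i hi).ne'])
    rw [hc1, hc2, smul_eq_mul, smul_eq_mul] at key
    have hdiv : (∑ i ∈ F', b i)⁻¹ * ∑ i ∈ F', a i = (∑ i ∈ F, a i) / (∑ i ∈ F', b i) := by
      rw [haF, inv_mul_eq_div]
    rw [hdiv] at key
    have key2 := mul_le_mul_of_nonneg_left key hSb'.le
    calc (∑ i ∈ F, a i) * Real.log ((∑ i ∈ F, a i) / (∑ i ∈ F', b i))
        = (∑ i ∈ F', b i) * (((∑ i ∈ F, a i) / (∑ i ∈ F', b i)) *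
            Real.log ((∑ i ∈ F, a i) / (∑ i ∈ F', b i))) := by
          rw [← mul_assoc, mul_div_cancel₀ _ hSb'.ne']
      _ ≤ (∑ i ∈ F', b i) * ((∑ i ∈ F', b i)⁻¹ * ∑ i ∈ F', a i * Real.log (a i / b i)) := key2
      _ = ∑ i ∈ F', a i * Real.log (a i / b i) := by
          rw [← mul_assoc, mul_inv_cancel₀ hSb'.ne', one_mul]
  · rw [if_neg hSa]
    have h0 : ∑ i ∈ F, a i = 0 :=
      le_antisymm (not_lt.mp hSa) (Finset.sum_nonneg ha)
    have hz : ∀ i ∈ F, a i = 0 := (Finset.sum_eq_zero_iff_of_nonneg ha).mp h0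
    have : ∑ i ∈ F, (if 0 < a i then a i * Real.log (a i / b i) else 0) = 0 :=
      Finset.sum_eq_zero (fun i hi => by rw [hz i hi]; simp)
    rw [this]

end AuxIB

section AuxIB2
variable {U A S : Type*} [Fintype U] [Fintype A] [Fintype S]

/-- Data processing inequality: merging the second coordinate along fibers of `s`
can only decrease mutual information. -/
private lemma mutInfo_dpi (q : U × A → ℝ) (hq : ∀ z, 0 ≤ q z) (s : A → S) :
    mutInfo (fun z : U × S => ∑ a ∈ Finset.univ.filter (fun a => s a = z.2), q (z.1, a))
      ≤ mutInfo q := by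
  unfold mutInfo
  rw [Fintype.sum_prod_type, Fintype.sum_prod_type]
  apply Finset.sum_le_sum
  intro u _
  rw [← fiber_sum' s (fun a => if 0 < q (u, a) then
      q (u, a) * Real.log (q (u, a) / ((∑ b, q (u, b)) * (∑ a', q (a', a)))) else 0)]
  apply Finset.sum_le_sum
  intro s0 _
  have h1 : (∑ b : S, ∑ a ∈ Finset.univ.filter (fun a => s a = b), q (u, a))
      = ∑ b, q (u, b) := fiber_sum' s _
  have h2 : (∑ u' : U, ∑ a ∈ Finset.univ.filter (fun a => s a = s0), q (u', a))
      = ∑ a ∈ Finset.univ.filter (fun a => s a = s0), ∑ u' : U, q (u', a) :=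
    Finset.sum_comm
  have key := log_sum_ineq (Finset.univ.filter (fun a => s a = s0))
      (fun x => q (u, x)) (fun x => (∑ b, q (u, b)) * (∑ u', q (u', x)))
      (fun i _ => hq _) (fun i _ => mul_nonneg (Finset.sum_nonneg fun _ _ => hq _)
        (Finset.sum_nonneg fun _ _ => hq _))
      (fun i _ hpos => mul_pos
        (lt_of_lt_of_le hpos (Finset.single_le_sum (fun b _ => hq (u, b)) (Finset.mem_univ i)))
        (lt_of_lt_of_le hpos (Finset.single_le_sum (fun u' _ => hq (u', i)) (Finset.mem_univ u))))
  have hbsum : ∑ x ∈ Finset.univ.filter (fun a => s a = s0),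
      (∑ b, q (u, b)) * (∑ u', q (u', x))
      = (∑ b, q (u, b)) * ∑ x ∈ Finset.univ.filter (fun a => s a = s0), (∑ u', q (u', x)) :=
    (Finset.mul_sum _ _ _).symm
  rw [hbsum] at key
  simpa only [h1, h2] using key

/-- Exact invariance of mutual information for kernels that factor through `s`. -/
private lemma mutInfo_lift {U A S : Type*} [Fintype U] [Fintype A] [Fintype S]
    (s : A → S) (r : S → U → ℝ) (hr : ∀ s0 u, 0 ≤ r s0 u)
    (f : A → ℝ) (hf : ∀ a, 0 < f a) :
    mutInfo (fun z : U × A => r (s z.2) z.1 * f z.2)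
      = mutInfo (fun z : U × S =>
          r z.2 z.1 * ∑ a ∈ Finset.univ.filter (fun a => s a = z.2), f a) := by
  unfold mutInfo
  rw [Fintype.sum_prod_type, Fintype.sum_prod_type]
  refine Finset.sum_congr rfl (fun u _ => ?_)
  simp only
  have hQU' : (∑ b : S, r b u * ∑ a ∈ Finset.univ.filter (fun a => s a = b), f a)
      = ∑ b : A, r (s b) u * f b := by
    rw [← fiber_sum' s (fun b => r (s b) u * f b)]
    refine Finset.sum_congr rfl (fun b _ => ?_)
    rw [Finset.mul_sum]
    refine Finset.sum_congr rfl (fun a ha => ?_)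
    rw [(Finset.mem_filter.mp ha).2]
  simp only [hQU']
  rw [← fiber_sum' s (fun a => if 0 < r (s a) u * f a then
      (r (s a) u * f a) * Real.log ((r (s a) u * f a) /
        ((∑ b, r (s b) u * f b) * (∑ u', r (s a) u' * f a))) else 0)]
  refine Finset.sum_congr rfl (fun s0 _ => ?_)
  have hstep : ∀ a ∈ Finset.univ.filter (fun a => s a = s0),
      (if 0 < r (s a) u * f a then
        (r (s a) u * f a) * Real.log ((r (s a) u * f a) /
          ((∑ b, r (s b) u * f b) * (∑ u', r (s a) u' * f a))) else 0)
      = (if 0 < r s0 u * f a then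
        (r s0 u * f a) * Real.log ((r s0 u * f a) /
          ((∑ b, r (s b) u * f b) * ((∑ u', r s0 u') * f a))) else 0) := by
    intro a ha
    rw [show (∑ u', r (s a) u' * f a) = (∑ u', r (s a) u') * f a from
      (Finset.sum_mul _ _ _).symm, (Finset.mem_filter.mp ha).2]
  rw [Finset.sum_congr rfl hstep,
    show (∑ u' : U, r s0 u' * ∑ a ∈ Finset.univ.filter (fun a => s a = s0), f a)
      = (∑ u' : U, r s0 u') * ∑ a ∈ Finset.univ.filter (fun a => s a = s0), f a from
      (Finset.sum_mul _ _ _).symm]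
  by_cases hr0 : 0 < r s0 u
  · by_cases hFpos : 0 < ∑ a ∈ Finset.univ.filter (fun a => s a = s0), f a
    · have hguard : (0:ℝ) < r s0 u * ∑ a ∈ Finset.univ.filter (fun a => s a = s0), f a :=
        mul_pos hr0 hFpos
      rw [if_pos hguard]
      have hcan : ∀ c : ℝ, c ≠ 0 →
          (r s0 u * c) / ((∑ b, r (s b) u * f b) * ((∑ u', r s0 u') * c))
          = r s0 u / ((∑ b, r (s b) u * f b) * (∑ u', r s0 u')) := by
        intro c hc
        rw [show (∑ b, r (s b) u * f b) * ((∑ u', r s0 u') * c)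
            = ((∑ b, r (s b) u * f b) * (∑ u', r s0 u')) * c by ring,
          mul_div_mul_right _ _ hc]
      have hterm : ∀ a ∈ Finset.univ.filter (fun a => s a = s0),
          (if 0 < r s0 u * f a then
            (r s0 u * f a) * Real.log ((r s0 u * f a) /
              ((∑ b, r (s b) u * f b) * ((∑ u', r s0 u') * f a))) else 0)
          = (r s0 u * f a) *
              Real.log (r s0 u / ((∑ b, r (s b) u * f b) * (∑ u', r s0 u'))) := by
        intro a _
        rw [if_pos (mul_pos hr0 (hf a)), hcan _ (hf a).ne']
      rw [Finset.sum_congr rfl hterm, ← Finset.sum_mul, ← Finset.mul_sum,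
        hcan _ hFpos.ne']
    · have hempty : Finset.univ.filter (fun a => s a = s0) = ∅ := by
        by_contra h
        exact hFpos (Finset.sum_pos (fun a _ => hf a) (Finset.nonempty_of_ne_empty h))
      rw [hempty]
      simp
  · have hz : r s0 u = 0 := le_antisymm (not_lt.mp hr0) (hr s0 u)
    rw [hz]
    simp

end AuxIB2

/-- The information-bottleneck Lagrangian value is preserved when
replacing `X` by a sufficient statistic `S = s(X)`. -/
theorem ib_lagrangian_sufficient_first_argument
    [Fintype 𝒳] [Nonempty 𝒳] [Fintype 𝒴] [Nonempty 𝒴]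
    [Fintype 𝒮] [Nonempty 𝒮]
    (p : 𝒳 × 𝒴 → ℝ) (hp : IsPMF p)
    (hX : ∀ x, 0 < margX p x) (hY : ∀ y, 0 < margY p y)
    (s : 𝒳 → 𝒮) (hs : SuffS p s)
    (β : ℝ) (hβ : 0 < β) :
    ibL p β
      = ibL (fun w : 𝒮 × 𝒴 =>
          ∑ x ∈ Finset.univ.filter (fun x => s x = w.1), p (x, w.2)) β := by
  have hp0 : ∀ z, 0 ≤ p z := hp.1
  set P : 𝒮 × 𝒴 → ℝ := fun w => ∑ x ∈ Finset.univ.filter (fun x => s x = w.1), p (x, w.2)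
    with hP
  have hXpos : ∀ x, 0 < ∑ y, p (x, y) := hX
  have hPmarg : ∀ s0 : 𝒮, (∑ y, P (s0, y))
      = ∑ x ∈ Finset.univ.filter (fun x => s x = s0), ∑ y, p (x, y) := by
    intro s0
    simp only [hP]
    rw [Finset.sum_comm]
  -- the two defining sets
  set SA : Set ℝ := { c | ∃ (n : ℕ) (r : 𝒳 → Fin n → ℝ),
    (∀ a u, 0 ≤ r a u) ∧ (∀ a, ∑ u, r a u = 1) ∧
    c = mutInfo (fun z : Fin n × 𝒳 => r z.2 z.1 * ∑ b, p (z.2, b))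
        - β * mutInfo (fun z : Fin n × 𝒴 => ∑ a, r a z.1 * p (a, z.2)) } with hSA
  set SB : Set ℝ := { c | ∃ (n : ℕ) (r : 𝒮 → Fin n → ℝ),
    (∀ a u, 0 ≤ r a u) ∧ (∀ a, ∑ u, r a u = 1) ∧
    c = mutInfo (fun z : Fin n × 𝒮 => r z.2 z.1 * ∑ b, P (z.2, b))
        - β * mutInfo (fun z : Fin n × 𝒴 => ∑ a, r a z.1 * P (a, z.2)) } with hSB
  have hgoal : ibL p β = sInf SA := rfl
  have hgoal2 : ibL P β = sInf SB := rfl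
  -- Direction a : SB ⊆ SA
  have hsub : SB ⊆ SA := by
    rintro c ⟨n, r', hr0, hr1, rfl⟩
    refine ⟨n, fun x => r' (s x), fun a u => hr0 _ _, fun a => hr1 _, ?_⟩
    have hia : mutInfo (fun z : Fin n × 𝒳 => r' (s z.2) z.1 * ∑ b, p (z.2, b))
        = mutInfo (fun z : Fin n × 𝒮 => r' z.2 z.1 * ∑ b, P (z.2, b)) := by
      rw [mutInfo_lift s r' hr0 (fun x => ∑ b, p (x, b)) hXpos]
      congr 1
      funext z
      rw [hPmarg z.2]
    have hib : (fun z : Fin n × 𝒴 => ∑ a : 𝒳, r' (s a) z.1 * p (a, z.2))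
        = fun z : Fin n × 𝒴 => ∑ a : 𝒮, r' a z.1 * P (a, z.2) := by
      funext z
      rw [← fiber_sum' s (fun a => r' (s a) z.1 * p (a, z.2))]
      refine Finset.sum_congr rfl (fun s0 _ => ?_)
      rw [hP]
      simp only
      rw [Finset.mul_sum]
      refine Finset.sum_congr rfl (fun x hx => ?_)
      rw [(Finset.mem_filter.mp hx).2]
    rw [hia, hib]
  -- Direction b : domination
  have hdom : ∀ c ∈ SA, ∃ c' ∈ SB, c' ≤ c := by
    rintro c ⟨n, r, hr0, hr1, rfl⟩
    have hn : 0 < n := by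
      rcases Nat.eq_zero_or_pos n with h | h
      · exfalso
        have h1 := hr1 (Classical.arbitrary 𝒳)
        subst h
        simpa using h1
      · exact h
    set g : 𝒮 → ℝ := fun s0 => ∑ x ∈ Finset.univ.filter (fun x => s x = s0), ∑ y, p (x, y)
      with hg
    have hgdef : ∀ s0, g s0
        = ∑ x ∈ Finset.univ.filter (fun x => s x = s0), ∑ y, p (x, y) := fun _ => rfl
    have hgnonneg : ∀ s0, 0 ≤ g s0 :=
      fun s0 => Finset.sum_nonneg fun x _ => (hXpos x).le
    have hgzero : ∀ s0, ¬ 0 < g s0 → Finset.univ.filter (fun x => s x = s0) = ∅ := by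
      intro s0 h
      by_contra hne
      exact h (Finset.sum_pos (fun x _ => hXpos x) (Finset.nonempty_of_ne_empty hne))
    set r' : 𝒮 → Fin n → ℝ := fun s0 u =>
      if 0 < g s0 then
        (∑ x ∈ Finset.univ.filter (fun x => s x = s0), r x u * ∑ y, p (x, y)) / g s0
      else if u = ⟨0, hn⟩ then 1 else 0 with hr'
    have hr'0 : ∀ s0 u, 0 ≤ r' s0 u := by
      intro s0 u
      rw [hr']
      simp only
      split
      · exact div_nonneg (Finset.sum_nonneg fun x _ =>
          mul_nonneg (hr0 _ _) (Finset.sum_nonneg fun _ _ => hp0 _)) (hgnonneg s0)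
      · split <;> norm_num
    have hr'1 : ∀ s0, ∑ u, r' s0 u = 1 := by
      intro s0
      rw [hr']
      simp only
      split
      · rename_i hgs
        rw [← Finset.sum_div]
        have hswap : (∑ u : Fin n, ∑ x ∈ Finset.univ.filter (fun x => s x = s0),
              r x u * ∑ y, p (x, y))
            = ∑ x ∈ Finset.univ.filter (fun x => s x = s0),
              ∑ u : Fin n, r x u * ∑ y, p (x, y) := Finset.sum_comm
        rw [hswap]
        have : ∀ x ∈ Finset.univ.filter (fun x => s x = s0),
            (∑ u, r x u * ∑ y, p (x, y)) = ∑ y, p (x, y) := by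
          intro x _
          rw [← Finset.sum_mul, hr1, one_mul]
        rw [Finset.sum_congr rfl this, ← hgdef s0, div_self hgs.ne']
      · simp
    -- key product identity
    have hprod : ∀ (s0 : 𝒮) (u : Fin n), r' s0 u * (∑ b, P (s0, b))
        = ∑ x ∈ Finset.univ.filter (fun x => s x = s0), r x u * ∑ y, p (x, y) := by
      intro s0 u
      rw [hPmarg s0, ← hgdef s0, hr']
      simp only
      split
      · rename_i hgs
        rw [div_mul_cancel₀ _ hgs.ne']
      · rename_i hgs
        have h0 : g s0 = 0 := le_antisymm (not_lt.mp hgs) (hgnonneg s0)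
        rw [hgzero s0 hgs, Finset.sum_empty, h0, mul_zero]
    -- Y-side channel equality
    have hYeq : (fun z : Fin n × 𝒴 => ∑ a : 𝒮, r' a z.1 * P (a, z.2))
        = fun z : Fin n × 𝒴 => ∑ a : 𝒳, r a z.1 * p (a, z.2) := by
      funext z
      obtain ⟨u, y⟩ := z
      simp only
      rw [← fiber_sum' s (fun a => r a u * p (a, y))]
      refine Finset.sum_congr rfl (fun s0 _ => ?_)
      by_cases hgs : 0 < g s0
      · -- use sufficiency
        have key : ∀ x ∈ Finset.univ.filter (fun x => s x = s0),
            (∑ y', p (x, y')) * P (s0, y) = p (x, y) * g s0 := by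
          intro x hx
          rw [hP]
          simp only
          rw [Finset.mul_sum, hgdef s0, Finset.mul_sum]
          refine Finset.sum_congr rfl (fun x' hx' => ?_)
          have hss : s x' = s x := by
            rw [(Finset.mem_filter.mp hx').2, (Finset.mem_filter.mp hx).2]
          have := hs x' x y hss
          have hmx : margX p x = ∑ y', p (x, y') := rfl
          have hmx' : margX p x' = ∑ y', p (x', y') := rfl
          rw [hmx, hmx'] at this
          linarith [this]
        have h1 : (∑ x ∈ Finset.univ.filter (fun x => s x = s0), r x u * ∑ y', p (x, y'))
              * P (s0, y)
            = (∑ x ∈ Finset.univ.filter (fun x => s x = s0), r x u * p (x, y)) * g s0 := by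
          rw [Finset.sum_mul, Finset.sum_mul]
          refine Finset.sum_congr rfl (fun x hx => ?_)
          rw [mul_assoc, mul_assoc, key x hx]
        rw [hr']
        simp only
        rw [if_pos hgs, div_mul_eq_mul_div, h1, mul_div_assoc, div_self hgs.ne', mul_one]
      · have hempty := hgzero s0 hgs
        have hPz : P (s0, y) = 0 := by
          rw [hP]
          simp only
          rw [hempty, Finset.sum_empty]
        rw [hPz, mul_zero, hempty, Finset.sum_empty]
    -- S-side inequality (DPI)
    have hSle : mutInfo (fun z : Fin n × 𝒮 => r' z.2 z.1 * ∑ b, P (z.2, b))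
        ≤ mutInfo (fun z : Fin n × 𝒳 => r z.2 z.1 * ∑ b, p (z.2, b)) := by
      have hfun : (fun z : Fin n × 𝒮 => r' z.2 z.1 * ∑ b, P (z.2, b))
          = fun z : Fin n × 𝒮 => ∑ a ∈ Finset.univ.filter (fun a => s a = z.2),
              (fun w : Fin n × 𝒳 => r w.2 w.1 * ∑ b, p (w.2, b)) (z.1, a) := by
        funext z
        exact hprod z.2 z.1
      rw [hfun]
      exact mutInfo_dpi (fun w : Fin n × 𝒳 => r w.2 w.1 * ∑ b, p (w.2, b))
        (fun w => mul_nonneg (hr0 _ _) (Finset.sum_nonneg fun _ _ => hp0 _)) s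
    refine ⟨mutInfo (fun z : Fin n × 𝒮 => r' z.2 z.1 * ∑ b, P (z.2, b))
        - β * mutInfo (fun z : Fin n × 𝒴 => ∑ a, r' a z.1 * P (a, z.2)),
      ⟨n, r', hr'0, hr'1, rfl⟩, ?_⟩
    rw [hYeq]
    exact sub_le_sub_right hSle _
  -- nonemptiness
  have hneB : SB.Nonempty := by
    refine ⟨_, ⟨1, fun _ _ => 1, fun _ _ => zero_le_one, fun _ => by simp, rfl⟩⟩
  have hneA : SA.Nonempty := ⟨_, hsub hneB.choose_spec⟩
  -- conclude
  rw [hgoal, hgoal2]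
  by_cases hb : BddBelow SB
  · have hba : BddBelow SA := by
      obtain ⟨m, hm⟩ := hb
      refine ⟨m, fun c hc => ?_⟩
      obtain ⟨c', hc', hle⟩ := hdom c hc
      exact le_trans (hm hc') hle
    apply le_antisymm
    · apply le_csInf hneB
      intro c hc
      exact csInf_le hba (hsub hc)
    · apply le_csInf hneA
      intro c hc
      obtain ⟨c', hc', hle⟩ := hdom c hc
      exact le_trans (csInf_le hb hc') hle
  · have hba : ¬ BddBelow SA := fun h => hb (h.mono hsub)
    rw [Real.sInf_of_not_bddBelow hba, Real.sInf_of_not_bddBelow hb]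


end
end

section
/- Suppose s : 𝒳 → 𝒮 and t : 𝒴 → 𝒯 are both sufficient. Let 𝒰 be a nonempty finite type and q a joint pmf on 𝒰 × 𝒳 × 𝒴 whose (𝒳,𝒴)-marginal is p and which satisfies the chain U−S−X−Y: q(u,x,y)·pS(s(x)) = qUS(u,s(x))·p(x,y) for all u,x,y, where qUS(u,s0) = ∑_{x : s(x)=s0} ∑_y q(u,x,y). Then I_q(U;Y) = I_q(U;T), where I_q(U;Y) is the mutual information of the (u,y)-marginal of q and I_q(U;T) is the mutual information of the joint distribution of (u, t(y)) under q. -/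
open Finset

noncomputable section
open scoped Classical

variable {𝒳 𝒴 𝒮 𝒯 : Type*}

section UST

variable {𝒰 : Type*}

/-- Joint distribution of `(U, X)` under a joint pmf `q` on `𝒰 × 𝒳 × 𝒴`. -/
def margUX [Fintype 𝒴] (q : 𝒰 × 𝒳 × 𝒴 → ℝ) (u : 𝒰) (x : 𝒳) : ℝ :=
  ∑ y, q (u, x, y)

/-- Joint distribution of `(U, S) = (U, s(X))` under a joint pmf `q` on `𝒰 × 𝒳 × 𝒴`. -/
def margUS [Fintype 𝒳] [Fintype 𝒴] (q : 𝒰 × 𝒳 × 𝒴 → ℝ) (s : 𝒳 → 𝒮)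
    (u : 𝒰) (s0 : 𝒮) : ℝ :=
  ∑ x ∈ Finset.univ.filter (fun x => s x = s0), margUX q u x


lemma aux_collapse {𝒰 𝒴 𝒯 : Type*} [Fintype 𝒰] [Fintype 𝒴] [Fintype 𝒯]
    (F : 𝒰 → 𝒴 → ℝ) (t : 𝒴 → 𝒯) (mY : 𝒴 → ℝ)
    (hF0 : ∀ u y, 0 ≤ F u y)
    (hmY : ∀ y, 0 < mY y)
    (hmargY : ∀ y, ∑ u, F u y = mY y)
    (hkey : ∀ u y, F u y * (∑ y' ∈ Finset.univ.filter (fun y' => t y' = t y), mY y')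
        = (∑ y' ∈ Finset.univ.filter (fun y' => t y' = t y), F u y') * mY y) :
    mutInfo (fun z : 𝒰 × 𝒴 => F z.1 z.2)
      = mutInfo (fun z : 𝒰 × 𝒯 => ∑ y ∈ Finset.univ.filter (fun y => t y = z.2), F z.1 y) := by
  classical
  set G : 𝒰 → 𝒯 → ℝ := fun u t0 => ∑ y ∈ Finset.univ.filter (fun y => t y = t0), F u y with hG
  set mT : 𝒯 → ℝ := fun t0 => ∑ y ∈ Finset.univ.filter (fun y => t y = t0), mY y with hmT
  set qU : 𝒰 → ℝ := fun u => ∑ y, F u y with hqU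
  have hG0 : ∀ u t0, 0 ≤ G u t0 := fun u t0 => Finset.sum_nonneg fun y _ => hF0 u y
  have hmTpos : ∀ y, 0 < mT (t y) :=
    fun y => Finset.sum_pos (fun y' _ => hmY y') ⟨y, by simp⟩
  have hGsum : ∀ u, ∑ t0, G u t0 = qU u := fun u => Finset.sum_fiberwise _ t (F u)
  have hGm : ∀ t0, ∑ u, G u t0 = mT t0 := by
    intro t0
    rw [hmT]
    rw [Finset.sum_comm]
    exact Finset.sum_congr rfl fun y _ => hmargY y
  have L : mutInfo (fun z : 𝒰 × 𝒴 => F z.1 z.2)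
      = ∑ u, ∑ t0, G u t0 * Real.log (G u t0 / (qU u * mT t0)) := by
    rw [mutInfo, Fintype.sum_prod_type]
    refine Finset.sum_congr rfl fun u _ => ?_
    have step1 : ∀ y, (if 0 < F u y then
        F u y * Real.log (F u y / ((∑ b, F u b) * (∑ a, F a y))) else 0)
        = F u y * Real.log (G u (t y) / (qU u * mT (t y))) := by
      intro y
      by_cases h : 0 < F u y
      · rw [if_pos h]
        congr 2
        rw [hmargY y]
        have h1 : F u y / mY y = G u (t y) / mT (t y) := by
          rw [div_eq_div_iff (ne_of_gt (hmY y)) (ne_of_gt (hmTpos y))]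
          exact hkey u y
        rw [show (∑ y, F u y) * mY y = mY y * qU u by rw [hqU]; ring,
            show qU u * mT (t y) = mT (t y) * qU u from mul_comm _ _,
            ← div_div, ← div_div, h1]
      · rw [if_neg h]
        have h0 : F u y = 0 := le_antisymm (not_lt.1 h) (hF0 u y)
        rw [h0, zero_mul]
    calc (∑ y, if 0 < F u y then
        F u y * Real.log (F u y / ((∑ b, F u b) * (∑ a, F a y))) else 0)
        = ∑ y, F u y * Real.log (G u (t y) / (qU u * mT (t y))) :=
          Finset.sum_congr rfl fun y _ => step1 y
      _ = ∑ t0, ∑ y ∈ Finset.univ.filter (fun y => t y = t0),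
            F u y * Real.log (G u (t y) / (qU u * mT (t y))) :=
          (Finset.sum_fiberwise _ t _).symm
      _ = ∑ t0, G u t0 * Real.log (G u t0 / (qU u * mT t0)) := by
          refine Finset.sum_congr rfl fun t0 _ => ?_
          have hcg : ∀ y ∈ Finset.univ.filter (fun y => t y = t0),
              F u y * Real.log (G u (t y) / (qU u * mT (t y)))
              = F u y * Real.log (G u t0 / (qU u * mT t0)) := fun y hy => by
            rw [(Finset.mem_filter.1 hy).2]
          rw [Finset.sum_congr rfl hcg,
            show G u t0 = ∑ y ∈ Finset.univ.filter (fun y => t y = t0), F u y from rfl,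
            ← Finset.sum_mul]
  have R : mutInfo (fun z : 𝒰 × 𝒯 =>
        ∑ y ∈ Finset.univ.filter (fun y => t y = z.2), F z.1 y)
      = ∑ u, ∑ t0, G u t0 * Real.log (G u t0 / (qU u * mT t0)) := by
    rw [mutInfo, Fintype.sum_prod_type]
    refine Finset.sum_congr rfl fun u _ => Finset.sum_congr rfl fun t0 _ => ?_
    dsimp only
    have e1 : (∑ b : 𝒯, ∑ y ∈ Finset.univ.filter (fun y => t y = b), F u y) = qU u :=
      hGsum u
    have e2 : (∑ a : 𝒰, ∑ y ∈ Finset.univ.filter (fun y => t y = t0), F a y) = mT t0 :=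
      hGm t0
    have e3 : (∑ y ∈ Finset.univ.filter (fun y => t y = t0), F u y) = G u t0 := rfl
    by_cases h : 0 < G u t0
    · rw [if_pos h, e1, e2, e3]
    · rw [if_neg h]
      have h0 : G u t0 = 0 := le_antisymm (not_lt.1 h) (hG0 u t0)
      rw [h0, zero_mul]
  rw [L, R]

/-- Under the chain `U - S - X - Y` and sufficiency of `s` and `t`,
`I(U; Y) = I(U; T)`. -/
theorem mutual_info_UY_eq_UT
    [Fintype 𝒳] [Nonempty 𝒳] [Fintype 𝒴] [Nonempty 𝒴]
    [Fintype 𝒮] [Nonempty 𝒮] [Fintype 𝒯] [Nonempty 𝒯]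
    (p : 𝒳 × 𝒴 → ℝ) (hp : IsPMF p)
    (hX : ∀ x, 0 < margX p x) (hY : ∀ y, 0 < margY p y)
    (s : 𝒳 → 𝒮) (t : 𝒴 → 𝒯)
    (hs : SuffS p s) (ht : SuffT p t)
    [Fintype 𝒰] [Nonempty 𝒰]
    (q : 𝒰 × 𝒳 × 𝒴 → ℝ) (hq : IsPMF q)
    (hmarg : ∀ x y, ∑ u, q (u, x, y) = p (x, y))
    (hchain : ∀ u x y, q (u, x, y) * margS p s (s x) = margUS q s u (s x) * p (x, y)) :
    mutInfo (fun z : 𝒰 × 𝒴 => ∑ x, q (z.1, x, z.2))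
      = mutInfo (fun z : 𝒰 × 𝒯 =>
          ∑ x, ∑ y ∈ Finset.univ.filter (fun y => t y = z.2), q (z.1, x, y)) := by
  have hq0 : ∀ u x y, 0 ≤ q (u, x, y) := fun u x y => hq.1 _
  have hpS : ∀ x, 0 < margS p s (s x) :=
    fun x => Finset.sum_pos (fun x' _ => hX x') ⟨x, by simp⟩
  have key : ∀ u x y y', t y = t y' →
      q (u, x, y) * margY p y' = q (u, x, y') * margY p y := by
    intro u x y y' hty
    have h1 := hchain u x y
    have h2 := hchain u x y'
    have h3 := ht x y y' hty
    apply mul_right_cancel₀ (hpS x).ne'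
    linear_combination (margY p y') * h1 - margY p y * h2 + margUS q s u (s x) * h3
  have hF0 : ∀ u y, 0 ≤ ∑ x, q (u, x, y) :=
    fun u y => Finset.sum_nonneg fun x _ => hq0 u x y
  have hmargY' : ∀ y, ∑ u, ∑ x, q (u, x, y) = margY p y := by
    intro y
    rw [Finset.sum_comm, margY]
    exact Finset.sum_congr rfl fun x _ => hmarg x y
  have hkey : ∀ u y, (∑ x, q (u, x, y)) *
        (∑ y' ∈ Finset.univ.filter (fun y' => t y' = t y), margY p y')
      = (∑ y' ∈ Finset.univ.filter (fun y' => t y' = t y), ∑ x, q (u, x, y')) *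
        margY p y := by
    intro u y
    rw [Finset.mul_sum, Finset.sum_mul]
    refine Finset.sum_congr rfl fun y' hy' => ?_
    have hty : t y = t y' := ((Finset.mem_filter.1 hy').2).symm
    rw [Finset.sum_mul, Finset.sum_mul]
    exact Finset.sum_congr rfl fun x _ => key u x y y' hty
  have hR : (fun z : 𝒰 × 𝒯 => ∑ x, ∑ y ∈ Finset.univ.filter (fun y => t y = z.2),
        q (z.1, x, y))
      = (fun z : 𝒰 × 𝒯 => ∑ y ∈ Finset.univ.filter (fun y => t y = z.2),
        ∑ x, q (z.1, x, y)) := funext fun z => Finset.sum_comm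
  rw [hR]
  exact aux_collapse (fun u y => ∑ x, q (u, x, y)) t (margY p) hF0 hY hmargY' hkey


end UST

end
end
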